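/- arXiv:2011.10128 — 2 statements merged into one kernel-verified Lean document; each statement's English description precedes it below -/
import Mathlib

section
/- The birational R-matrix is an involution: for any two vectors a, b in (ℝ_{>0})^n, applying the map η twice returns (a, b). That is, if η(a,b) = (b', a') with a'_i = a_{i-1} κ_{i-1}(a,b)/κ_i(a,b) and b'_i = b_{i+1} κ_{i+1}(a,b)/κ_i(a,b), then η(b', a') = (a, b). -/
open Finset

noncomputable section BirationalR

/-- A vector of reals with cyclically indexed coordinates (upper index mod `n`). -/
abbrev Vec (n : ℕ) := ZMod n → ℝ

/-- `κ_r(a,b) = Σ_{j=r}^{r+n-1} (Π_{k=r+1}^{j} b_k)(Π_{k=j+1}^{r+n-1} a_k)`, indices mod `n`. -/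
def kappaF (n : ℕ) (r : ZMod n) (a b : Vec n) : ℝ :=
  ∑ d ∈ Finset.range n,
    (∏ t ∈ Finset.range d, b (r + 1 + (t : ℕ))) *
      ∏ t ∈ Finset.range (n - 1 - d), a (r + 1 + (d : ℕ) + (t : ℕ))

/-- First component `b'` of the birational R-matrix `η(a,b) = (b',a')`:
`b'_i = b_{i+1} κ_{i+1}(a,b)/κ_i(a,b)`. -/
def etaB (n : ℕ) (a b : Vec n) : Vec n :=
  fun i => b (i + 1) * kappaF n (i + 1) a b / kappaF n i a b

/-- Second component `a'` of `η(a,b) = (b',a')`: `a'_i = a_{i-1} κ_{i-1}(a,b)/κ_i(a,b)`. -/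
def etaA (n : ℕ) (a b : Vec n) : Vec n :=
  fun i => a (i - 1) * kappaF n (i - 1) a b / kappaF n i a b

/-- `η` applied to positions `(p, p+1)` of a tuple of vectors. -/
def etaAt (n : ℕ) (p : ℕ) (X : ℕ → Vec n) : ℕ → Vec n :=
  fun q => if q = p then etaB n (X p) (X (p + 1))
    else if q = p + 1 then etaA n (X p) (X (p + 1)) else X q

/-- Action of the word `s_{w₁} s_{w₂} ⋯ s_{wₗ}` (rightmost acts first). -/
def applyWord (n : ℕ) (w : List ℕ) (X : ℕ → Vec n) : ℕ → Vec n :=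
  w.foldr (etaAt n) X

/-- The tuple `(x_i, x_{i+1}, …, x_j)` as a list. -/
def seg {n : ℕ} (x : ℕ → Vec n) (i j : ℕ) : List (Vec n) :=
  (List.range (j + 1 - i)).map fun t => x (i + t)

/-- `τ_k^{(r)}(x_1,…,x_m)`: sum over weakly increasing `i_1 ≤ … ≤ i_k`, no index used
more than `n-1` times, of `x_{i_1}^{(r)} x_{i_2}^{(r-1)} ⋯ x_{i_k}^{(r-k+1)}`.
Encoded via multiplicity functions; `τ = 0` for negative `k`. -/
def tauF (n : ℕ) (r : ZMod n) (k : ℤ) (x : List (Vec n)) : ℝ :=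
  if 0 ≤ k then
    ∑ c ∈ (Fintype.piFinset fun _ : Fin x.length => Finset.range n).filter
        (fun c => ∑ i, c i = k.toNat),
      ∏ i : Fin x.length, ∏ β ∈ Finset.range (c i),
        x.get i (r - (∑ i' ∈ Finset.univ.filter (fun i' => i' < i), c i' : ℕ) - (β : ℕ))
  else 0

/-- `σ_k^{(r)}(x_1,…,x_m) = Σ_{t=0}^{k} x_1^{(r)} ⋯ x_1^{(r-t+1)} τ_{k-t}^{(r-t)}(x_2,…,x_m)`. -/
def sigmaF (n : ℕ) (r : ZMod n) (k : ℕ) : List (Vec n) → ℝ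
  | [] => if k = 0 then 1 else 0
  | y :: rest =>
      ∑ t ∈ Finset.range (k + 1),
        (∏ β ∈ Finset.range t, y (r - (β : ℕ))) * tauF n (r - (t : ℕ)) ((k : ℤ) - (t : ℤ)) rest

/-- `σ̄_k^{(r)}(x_1,…,x_m) = Σ_{t=0}^{k} τ_{k-t}^{(r)}(x_1,…,x_{m-1}) x_m^{(r-k+t)} ⋯ x_m^{(r-k+1)}`. -/
def sigmaBarF (n : ℕ) (r : ZMod n) (k : ℕ) : List (Vec n) → ℝ
  | [] => if k = 0 then 1 else 0
  | y :: rest =>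
      ∑ t ∈ Finset.range (k + 1),
        tauF n r ((k : ℤ) - (t : ℤ)) ((y :: rest).dropLast) *
          ∏ β ∈ Finset.range t,
            (y :: rest).getLast (List.cons_ne_nil y rest) (r - (k : ℕ) + 1 + (β : ℕ))

/-- `Ω_k^{(r)}(x_i,…,x_j) = Σ_{ℓ=0}^{n-1} σ^{(r)}_{(n-1)(k-i)+ℓ}(x_i,…,x_k)
σ̄^{(r+k-i-ℓ)}_{(n-1)(j-k)-ℓ}(x_{k+1},…,x_j)`. -/
def OmegaF (n : ℕ) (r : ZMod n) (k i j : ℕ) (x : ℕ → Vec n) : ℝ :=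
  ∑ ℓ ∈ Finset.range n,
    sigmaF n r ((n - 1) * (k - i) + ℓ) (seg x i k) *
      sigmaBarF n (r + (k : ℕ) - (i : ℕ) - (ℓ : ℕ)) ((n - 1) * (j - k) - ℓ) (seg x (k + 1) j)

/-- `P_k^{(r)}(x_i,…,x_j) = Σ_{t=0}^{k} (Π_{s=0}^{t-1} x_i^{(r-s)})
σ_{(n-1)(j-i-1)}^{(r-t)}(x_i,…,x_{j-1}) (Π_{s=0}^{k-t-1} x_j^{(r-t+j-i-1-s)})`. -/
def PF (n : ℕ) (r : ZMod n) (k i j : ℕ) (x : ℕ → Vec n) : ℝ :=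
  ∑ t ∈ Finset.range (k + 1),
    (∏ s ∈ Finset.range t, x i (r - (s : ℕ))) *
      sigmaF n (r - (t : ℕ)) ((n - 1) * (j - i - 1)) (seg x i (j - 1)) *
      ∏ s ∈ Finset.range (k - t), x j (r - (t : ℕ) + (j : ℕ) - (i : ℕ) - 1 - (s : ℕ))

end BirationalR

noncomputable section EtaProofAux
open Finset

/-- Auxiliary partial sum `U_m`. -/
def UF (n : ℕ) (a b : Vec n) (r : ZMod n) (m : ℕ) : ℝ :=
  ∑ e ∈ Finset.range m, (∏ t ∈ Finset.range e, b (r + 1 + (t : ℕ))) *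
    ∏ t ∈ Finset.range (m - 1 - e), a (r + 1 + (e : ℕ) + (t : ℕ))

/-- Auxiliary `A_d`. -/
def AFx (n : ℕ) (a b : Vec n) (r : ZMod n) (d : ℕ) : ℝ :=
  (∏ t ∈ Finset.range d, a (r + (t : ℕ))) *
    ∏ t ∈ Finset.range (n - 1 - d), b (r + 2 + (d : ℕ) + (t : ℕ))

/-- Auxiliary `B_m`. -/
def BFx (n : ℕ) (b : Vec n) (r : ZMod n) (m : ℕ) : ℝ :=
  ∏ t ∈ Finset.range (n - 1 - m), b (r + 1 + (m : ℕ) + (t : ℕ))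

variable {n : ℕ} (a b : Vec n)

lemma kappa_pos (hn : 1 ≤ n) (ha : ∀ i, 0 < a i) (hb : ∀ i, 0 < b i) (s : ZMod n) :
    0 < kappaF n s a b := by
  apply Finset.sum_pos
  · intro d _
    exact mul_pos (Finset.prod_pos fun t _ => hb _) (Finset.prod_pos fun t _ => ha _)
  · exact Finset.nonempty_range_iff.mpr (by omega)

lemma cyc_prod [NeZero n] (x : Vec n) (s : ZMod n) :
    ∏ t ∈ Finset.range n, x (s + (t : ℕ)) = ∏ i, x i := by
  apply Finset.prod_nbij' (fun t => s + (t : ℕ)) (fun i => (i - s).val)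
  · intro t _; exact Finset.mem_univ _
  · intro i _; exact Finset.mem_range.mpr (ZMod.val_lt _)
  · intro t ht
    simp only [Finset.mem_range] at ht
    rw [add_sub_cancel_left, ZMod.val_natCast_of_lt ht]
  · intro i _
    rw [ZMod.natCast_val, ZMod.cast_id, add_sub_cancel]
  · intro t _; rfl

lemma rel2 [NeZero n] (s : ZMod n) :
    a s * kappaF n s a b = b (s + 1) * kappaF n (s + 1) a b + ((∏ i, a i) - ∏ i, b i) := by
  have hn : 1 ≤ n := Nat.one_le_iff_ne_zero.mpr (NeZero.ne n)
  obtain ⟨m, hm⟩ : ∃ m, n = m + 1 := ⟨n - 1, by omega⟩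
  subst hm
  rw [kappaF, kappaF, Finset.mul_sum, Finset.mul_sum]
  rw [Finset.sum_range_succ'
    (fun d => a s * ((∏ t ∈ Finset.range d, b (s + 1 + (t : ℕ))) *
      ∏ t ∈ Finset.range (m + 1 - 1 - d), a (s + 1 + (d : ℕ) + (t : ℕ)))) m]
  rw [Finset.sum_range_succ
    (fun d => b (s + 1) * ((∏ t ∈ Finset.range d, b (s + 1 + 1 + (t : ℕ))) *
      ∏ t ∈ Finset.range (m + 1 - 1 - d), a (s + 1 + 1 + (d : ℕ) + (t : ℕ)))) m]
  have key : ∀ d ∈ Finset.range m,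
      a s * ((∏ t ∈ Finset.range (d + 1), b (s + 1 + (t : ℕ))) *
        ∏ t ∈ Finset.range (m + 1 - 1 - (d + 1)), a (s + 1 + ((d + 1 : ℕ) : ZMod (m + 1)) + (t : ℕ)))
      = b (s + 1) * ((∏ t ∈ Finset.range d, b (s + 1 + 1 + (t : ℕ))) *
        ∏ t ∈ Finset.range (m + 1 - 1 - d), a (s + 1 + 1 + (d : ℕ) + (t : ℕ))) := by
    intro d hd
    rw [Finset.mem_range] at hd
    rw [Finset.prod_range_succ' (fun t => b (s + 1 + (t : ℕ))) d]
    have eb : ∀ t : ℕ, b (s + 1 + ((t + 1 : ℕ) : ZMod (m + 1))) = b (s + 1 + 1 + (t : ℕ)) := by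
      intro t; congr 1; push_cast; ring
    simp only [eb, Nat.cast_zero, add_zero]
    have hr : m + 1 - 1 - d = (m + 1 - 1 - (d + 1)) + 1 := by omega
    rw [hr, Finset.prod_range_succ]
    have ea : a (s + 1 + 1 + (d : ℕ) + ((m + 1 - 1 - (d + 1) : ℕ) : ZMod (m + 1))) = a s := by
      congr 1
      have h3 : (2 + d + (m + 1 - 1 - (d + 1)) : ℕ) = m + 1 := by omega
      calc s + 1 + 1 + (d : ℕ) + ((m + 1 - 1 - (d + 1) : ℕ) : ZMod (m + 1))
          = s + ((2 + d + (m + 1 - 1 - (d + 1)) : ℕ) : ZMod (m + 1)) := by push_cast; ring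
        _ = s + (((m + 1 : ℕ)) : ZMod (m + 1)) := by rw [h3]
        _ = s := by simp [ZMod.natCast_self]
    have ea2 : ∀ t : ℕ, a (s + 1 + ((d + 1 : ℕ) : ZMod (m + 1)) + (t : ℕ))
        = a (s + 1 + 1 + (d : ℕ) + (t : ℕ)) := by
      intro t; congr 1; push_cast; ring
    simp only [ea, ea2]
    ring
  rw [Finset.sum_congr rfl key]
  have hA : a s * ((∏ t ∈ Finset.range 0, b (s + 1 + (t : ℕ))) *
      ∏ t ∈ Finset.range (m + 1 - 1 - 0), a (s + 1 + ((0 : ℕ) : ZMod (m + 1)) + (t : ℕ)))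
      = ∏ i, a i := by
    simp only [Finset.range_zero, Finset.prod_empty, one_mul, Nat.cast_zero, add_zero,
      Nat.add_sub_cancel, Nat.sub_zero]
    rw [← cyc_prod a s, Finset.prod_range_succ' (fun t => a (s + (t : ℕ))) m]
    have e : ∀ t : ℕ, a (s + ((t + 1 : ℕ) : ZMod (m + 1))) = a (s + 1 + (t : ℕ)) := by
      intro t; congr 1; push_cast; ring
    simp only [e, Nat.cast_zero, add_zero]
    ring
  have hB : b (s + 1) * ((∏ t ∈ Finset.range m, b (s + 1 + 1 + (t : ℕ))) *
      ∏ t ∈ Finset.range (m + 1 - 1 - m), a (s + 1 + 1 + (m : ℕ) + (t : ℕ)))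
      = ∏ i, b i := by
    simp only [Nat.add_sub_cancel, Nat.sub_self, Finset.range_zero, Finset.prod_empty, mul_one]
    rw [← cyc_prod b (s + 1), Finset.prod_range_succ' (fun t => b (s + 1 + (t : ℕ))) m]
    have e : ∀ t : ℕ, b (s + 1 + ((t + 1 : ℕ) : ZMod (m + 1))) = b (s + 1 + 1 + (t : ℕ)) := by
      intro t; congr 1; push_cast; ring
    simp only [e, Nat.cast_zero, add_zero]
    ring
  rw [hA] at *
  rw [hB]
  ring

lemma UF_succ (r : ZMod n) (m : ℕ) :
    UF n a b r (m + 1) = a (r + (m : ℕ)) * UF n a b r m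
      + ∏ t ∈ Finset.range m, b (r + 1 + (t : ℕ)) := by
  rw [UF, Finset.sum_range_succ]
  simp only [Nat.add_sub_cancel, Nat.sub_self, Finset.range_zero, Finset.prod_empty, mul_one]
  rw [UF, Finset.mul_sum]
  congr 1
  apply Finset.sum_congr rfl
  intro e he
  rw [Finset.mem_range] at he
  have h1 : m - e = (m - 1 - e) + 1 := by omega
  rw [h1, Finset.prod_range_succ]
  have h2 : r + 1 + (e : ℕ) + ((m - 1 - e : ℕ) : ZMod n) = r + (m : ℕ) := by
    have h3 : (e + 1 + (m - 1 - e) : ℕ) = m := by omega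
    calc r + 1 + (e : ℕ) + ((m - 1 - e : ℕ) : ZMod n)
        = r + ((e + 1 + (m - 1 - e) : ℕ) : ZMod n) := by push_cast; ring
      _ = r + (m : ℕ) := by rw [h3]
  rw [h2]
  ring

lemma starSum [NeZero n] (r : ZMod n) (m : ℕ) :
    ((∏ i, a i) - ∏ i, b i) * UF n a b r m
      + (∏ t ∈ Finset.range m, b (r + 1 + (t : ℕ))) * kappaF n (r + (m : ℕ)) a b
    = (∏ t ∈ Finset.range m, a (r + (t : ℕ))) * kappaF n r a b := by
  induction m with
  | zero => simp [UF]
  | succ m ih =>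
    rw [UF_succ, Finset.prod_range_succ, Finset.prod_range_succ]
    have hrel := rel2 a b (r + (m : ℕ))
    have e1 : (r + (m : ℕ)) + 1 = r + ((m + 1 : ℕ) : ZMod n) := by push_cast; ring
    have e2 : b ((r + (m : ℕ)) + 1) = b (r + 1 + (m : ℕ)) := by congr 1; ring
    rw [e2] at hrel
    rw [e1] at hrel
    linear_combination a (r + (m : ℕ)) * ih - (∏ t ∈ Finset.range m, b (r + 1 + (t : ℕ))) * hrel

lemma starM [NeZero n] (r : ZMod n) (m : ℕ) :
    UF n a b r (m + 1) * kappaF n (r + (m : ℕ)) a b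
      = b (r + 1 + (m : ℕ)) * UF n a b r m * kappaF n (r + ((m + 1 : ℕ) : ZMod n)) a b
        + (∏ t ∈ Finset.range m, a (r + (t : ℕ))) * kappaF n r a b := by
  have hrel := rel2 a b (r + (m : ℕ))
  have e1 : (r + (m : ℕ)) + 1 = r + ((m + 1 : ℕ) : ZMod n) := by push_cast; ring
  have e2 : b ((r + (m : ℕ)) + 1) = b (r + 1 + (m : ℕ)) := by congr 1; ring
  rw [e2] at hrel
  rw [e1] at hrel
  rw [UF_succ]
  linear_combination UF n a b r m * hrel + starSum a b r m

lemma cancel1 (P Q K1 Kd : ℝ) (h : Kd ≠ 0) : P / Kd * (Q * Kd / K1) = P * Q / K1 := by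
  rw [div_mul_div_comm, mul_comm Kd K1, show P * (Q * Kd) = P * Q * Kd by ring,
    mul_div_mul_right _ _ h]

lemma cancel2 (P Q K1 Kq Kd : ℝ) (h : Kd ≠ 0) :
    P * Kd / K1 * (Q * Kq / Kd) = P * Q * Kq / K1 := by
  rw [div_mul_div_comm, show P * Kd * (Q * Kq) = P * Q * Kq * Kd by ring,
    mul_div_mul_right _ _ h]

lemma telA (hn : 1 ≤ n) (ha : ∀ i, 0 < a i) (hb : ∀ i, 0 < b i) (r : ZMod n) (d : ℕ) :
    ∏ t ∈ Finset.range d, etaA n a b (r + 1 + (t : ℕ))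
      = (∏ t ∈ Finset.range d, a (r + (t : ℕ))) * kappaF n r a b
        / kappaF n (r + (d : ℕ)) a b := by
  have hK := kappa_pos a b hn ha hb
  induction d with
  | zero => simp [div_self (ne_of_gt (hK r))]
  | succ d ih =>
    rw [Finset.prod_range_succ, ih, Finset.prod_range_succ, etaA]
    have e1 : r + 1 + (d : ℕ) - 1 = r + (d : ℕ) := by ring
    have e2 : r + 1 + (d : ℕ) = r + ((d + 1 : ℕ) : ZMod n) := by push_cast; ring
    rw [e1, e2, cancel1 _ _ _ _ (hK (r + (d : ℕ))).ne']
    ring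

lemma telB (hn : 1 ≤ n) (ha : ∀ i, 0 < a i) (hb : ∀ i, 0 < b i) (s : ZMod n) (d : ℕ) :
    ∏ t ∈ Finset.range d, etaB n a b (s + 1 + (t : ℕ))
      = (∏ t ∈ Finset.range d, b (s + 2 + (t : ℕ))) * kappaF n (s + 1 + (d : ℕ)) a b
        / kappaF n (s + 1) a b := by
  have hK := kappa_pos a b hn ha hb
  induction d with
  | zero => simp [div_self (ne_of_gt (hK (s + 1)))]
  | succ d ih =>
    rw [Finset.prod_range_succ, ih, Finset.prod_range_succ, etaB]
    have e1 : s + 1 + (d : ℕ) + 1 = s + 2 + (d : ℕ) := by ring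
    have e2 : s + 1 + ((d + 1 : ℕ) : ZMod n) = s + 2 + (d : ℕ) := by push_cast; ring
    rw [e1, e2, cancel2 _ _ _ _ _ (hK (s + 1 + (d : ℕ))).ne']

lemma Gsum [NeZero n] (ha : ∀ i, 0 < a i) (hb : ∀ i, 0 < b i) (r : ZMod n) (m : ℕ)
    (hm : m ≤ n - 1) :
    ∑ d ∈ Finset.range m,
        AFx n a b r d / (kappaF n (r + (d : ℕ)) a b * kappaF n (r + ((d + 1 : ℕ) : ZMod n)) a b)
      = b r * UF n a b r m * BFx n b r m / (kappaF n r a b * kappaF n (r + (m : ℕ)) a b) := by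
  have hn : 1 ≤ n := Nat.one_le_iff_ne_zero.mpr (NeZero.ne n)
  have hK := kappa_pos a b hn ha hb
  induction m with
  | zero => simp [UF]
  | succ m ih =>
    have hm' : m ≤ n - 1 := by omega
    rw [Finset.sum_range_succ, ih hm']
    -- B m = b (r+1+m) * B (m+1)
    have hBm : BFx n b r m = b (r + 1 + (m : ℕ)) * BFx n b r (m + 1) := by
      rw [BFx, BFx, show n - 1 - m = (n - 1 - (m + 1)) + 1 by omega,
        Finset.prod_range_succ' (fun t => b (r + 1 + (m : ℕ) + (t : ℕ)))]
      have e : ∀ t : ℕ, b (r + 1 + (m : ℕ) + ((t + 1 : ℕ) : ZMod n))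
          = b (r + 1 + ((m + 1 : ℕ) : ZMod n) + (t : ℕ)) := by
        intro t; congr 1; push_cast; ring
      simp only [e, Nat.cast_zero, add_zero]
      ring
    -- A m = b r * Pam * B (m+1)
    have hAm : AFx n a b r m
        = b r * (∏ t ∈ Finset.range m, a (r + (t : ℕ))) * BFx n b r (m + 1) := by
      rw [AFx, BFx, show n - 1 - m = (n - 1 - (m + 1)) + 1 by omega, Finset.prod_range_succ]
      have elast : b (r + 2 + (m : ℕ) + ((n - 1 - (m + 1) : ℕ) : ZMod n)) = b r := by
        congr 1
        have h3 : (2 + m + (n - 1 - (m + 1)) : ℕ) = n := by omega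
        calc r + 2 + (m : ℕ) + ((n - 1 - (m + 1) : ℕ) : ZMod n)
            = r + ((2 + m + (n - 1 - (m + 1)) : ℕ) : ZMod n) := by push_cast; ring
          _ = r + ((n : ℕ) : ZMod n) := by rw [h3]
          _ = r := by simp [ZMod.natCast_self]
      have e : ∀ t : ℕ, b (r + 2 + (m : ℕ) + (t : ℕ))
          = b (r + 1 + ((m + 1 : ℕ) : ZMod n) + (t : ℕ)) := by
        intro t; congr 1; push_cast; ring
      rw [elast]
      simp only [e]
      ring
    rw [hBm, hAm]
    have h1 := (hK r).ne'
    have h2 := (hK (r + (m : ℕ))).ne'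
    have h3 := (hK (r + ((m + 1 : ℕ) : ZMod n))).ne'
    rw [div_add_div _ _ (mul_ne_zero h1 h2) (mul_ne_zero h2 h3),
      div_eq_div_iff (mul_ne_zero (mul_ne_zero h1 h2) (mul_ne_zero h2 h3))
        (mul_ne_zero h1 h3)]
    linear_combination (-(b r * BFx n b r (m + 1) * kappaF n r a b
      * kappaF n (r + ((m + 1 : ℕ) : ZMod n)) a b * kappaF n (r + (m : ℕ)) a b)) * starM a b r m

lemma L7 [NeZero n] (r : ZMod n) :
    b r * UF n a b r (n - 1) + (∏ t ∈ Finset.range (n - 1), a (r + (t : ℕ)))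
      = kappaF n (r + ((n - 1 : ℕ) : ZMod n)) a b := by
  have hn : 1 ≤ n := Nat.one_le_iff_ne_zero.mpr (NeZero.ne n)
  obtain ⟨m, hm⟩ : ∃ m, n = m + 1 := ⟨n - 1, by omega⟩
  subst hm
  simp only [Nat.add_sub_cancel]
  rw [kappaF]
  have hz : ((m : ℕ) : ZMod (m + 1)) + 1 = 0 := by
    rw [show ((m : ℕ) : ZMod (m + 1)) + 1 = ((m + 1 : ℕ) : ZMod (m + 1)) by push_cast; ring,
      ZMod.natCast_self]
  have eb : ∀ t : ℕ, b (r + ((m : ℕ) : ZMod (m + 1)) + 1 + (t : ℕ)) = b (r + (t : ℕ)) := by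
    intro t; congr 1; rw [add_assoc r _ 1, hz, add_zero]
  have ea : ∀ d t : ℕ, a (r + ((m : ℕ) : ZMod (m + 1)) + 1 + (d : ℕ) + (t : ℕ))
      = a (r + (d : ℕ) + (t : ℕ)) := by
    intro d t; congr 1; rw [add_assoc r _ 1, hz, add_zero]
  simp only [eb, ea, Nat.add_sub_cancel]
  rw [Finset.sum_range_succ'
    (fun d => (∏ t ∈ Finset.range d, b (r + (t : ℕ))) *
      ∏ t ∈ Finset.range (m - d), a (r + (d : ℕ) + (t : ℕ))) m]
  simp only [Finset.range_zero, Finset.prod_empty, one_mul, Nat.cast_zero, add_zero,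
    Nat.sub_zero, Nat.sub_self, mul_one]
  congr 1
  rw [UF, Finset.mul_sum]
  apply Finset.sum_congr rfl
  intro d hd
  rw [Finset.mem_range] at hd
  rw [Finset.prod_range_succ' (fun t => b (r + (t : ℕ))) d]
  have e : ∀ t : ℕ, b (r + ((t + 1 : ℕ) : ZMod (m + 1))) = b (r + 1 + (t : ℕ)) := by
    intro t; congr 1; push_cast; ring
  have e2 : ∀ t : ℕ, a (r + ((d + 1 : ℕ) : ZMod (m + 1)) + (t : ℕ))
      = a (r + 1 + (d : ℕ) + (t : ℕ)) := by
    intro t; congr 1; push_cast; ring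
  have e3 : m - (d + 1) = m - 1 - d := by omega
  simp only [e, e2, e3, Nat.cast_zero, add_zero]
  ring

lemma kappa_inv (hn : 1 ≤ n) (ha : ∀ i, 0 < a i) (hb : ∀ i, 0 < b i) (r : ZMod n) :
    kappaF n r (etaB n a b) (etaA n a b) = kappaF n r a b := by
  haveI : NeZero n := ⟨by omega⟩
  have hK := kappa_pos a b hn ha hb
  rw [kappaF]
  have key : ∀ d ∈ Finset.range n,
      (∏ t ∈ Finset.range d, etaA n a b (r + 1 + (t : ℕ))) *
        ∏ t ∈ Finset.range (n - 1 - d), etaB n a b (r + 1 + (d : ℕ) + (t : ℕ))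
      = AFx n a b r d /
          (kappaF n (r + (d : ℕ)) a b * kappaF n (r + ((d + 1 : ℕ) : ZMod n)) a b) *
          (kappaF n r a b * kappaF n r a b) := by
    intro d hd
    rw [Finset.mem_range] at hd
    rw [telA a b hn ha hb r d]
    have eidx : ∀ t : ℕ, etaB n a b (r + 1 + (d : ℕ) + (t : ℕ))
        = etaB n a b ((r + (d : ℕ)) + 1 + (t : ℕ)) := by
      intro t; congr 1; ring
    simp only [eidx]
    rw [telB a b hn ha hb (r + (d : ℕ)) (n - 1 - d)]
    have eK1 : (r + (d : ℕ)) + 1 + ((n - 1 - d : ℕ) : ZMod n) = r := by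
      have h3 : (d + 1 + (n - 1 - d) : ℕ) = n := by omega
      calc (r + (d : ℕ)) + 1 + ((n - 1 - d : ℕ) : ZMod n)
          = r + ((d + 1 + (n - 1 - d) : ℕ) : ZMod n) := by push_cast; ring
        _ = r + ((n : ℕ) : ZMod n) := by rw [h3]
        _ = r := by simp [ZMod.natCast_self]
    have eK2 : (r + (d : ℕ)) + 1 = r + ((d + 1 : ℕ) : ZMod n) := by push_cast; ring
    have eb2 : ∀ t : ℕ, b ((r + (d : ℕ)) + 2 + (t : ℕ)) = b (r + 2 + (d : ℕ) + (t : ℕ)) := by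
      intro t; congr 1; ring
    rw [eK1, eK2]
    simp only [eb2]
    rw [div_mul_div_comm, AFx]
    ring
  rw [Finset.sum_congr rfl key, ← Finset.sum_mul]
  obtain ⟨m, hm⟩ : ∃ m, n = m + 1 := ⟨n - 1, by omega⟩
  subst hm
  rw [Finset.sum_range_succ, Gsum a b ha hb r m (by omega)]
  have hz : r + ((m + 1 : ℕ) : ZMod (m + 1)) = r := by simp [ZMod.natCast_self]
  have hBm1 : BFx (m + 1) b r m = 1 := by
    rw [BFx]; simp [Nat.sub_self]
  have hAm : AFx (m + 1) a b r m = ∏ t ∈ Finset.range m, a (r + (t : ℕ)) := by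
    rw [AFx]; simp [Nat.sub_self]
  rw [hz, hBm1, hAm, mul_one]
  have hL7 := L7 a b r
  simp only [Nat.add_sub_cancel] at hL7
  have h1 := (hK r).ne'
  have h2 := (hK (r + (m : ℕ))).ne'
  rw [div_add_div _ _ (mul_ne_zero h1 h2) (mul_ne_zero h2 h1),
    div_mul_eq_mul_div, div_eq_iff (by positivity)]
  linear_combination kappaF (m + 1) r a b * kappaF (m + 1) r a b * kappaF (m + 1) r a b
    * kappaF (m + 1) (r + (m : ℕ)) a b * hL7

end EtaProofAux



/-- the birational R-matrix `η` is an involution: `η(η(a,b)) = (a,b)`. -/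
theorem eta_involution (n : ℕ) (hn : 1 ≤ n) (a b : Vec n)
    (ha : ∀ i, 0 < a i) (hb : ∀ i, 0 < b i) :
    etaB n (etaB n a b) (etaA n a b) = a ∧ etaA n (etaB n a b) (etaA n a b) = b := by
  have hK := kappa_pos a b hn ha hb
  constructor
  · funext i
    rw [etaB, kappa_inv a b hn ha hb, kappa_inv a b hn ha hb, etaA]
    rw [show i + 1 - 1 = i by ring]
    have h1 := (hK i).ne'
    have h2 := (hK (i + 1)).ne'
    field_simp
  · funext i
    rw [etaA, kappa_inv a b hn ha hb, kappa_inv a b hn ha hb, etaB]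
    rw [show i - 1 + 1 = i by ring]
    have h1 := (hK i).ne'
    have h2 := (hK (i - 1)).ne'
    field_simp
end

section
/- Branching identity for σ: for m-tuples of vectors x_i, ..., x_j (j > i) in positive reals with n components indexed cyclically, σ_{(n-1)(j-i)}^{(r)}(x_i, ..., x_j) = Σ_{k=0}^{n-1} (Π_{t=0}^{k-1} x_i^{(r-t)}) σ_{(n-1)(j-i-1)}^{(r-k)}(x_i, ..., x_{j-1}) (Π_{s=0}^{n-k-2} x_j^{(r-k+j-i-1-s)}), where all upper indices are taken modulo n. -/
open Finset

noncomputable section BirationalR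

lemma tauF_neg (n : ℕ) (r : ZMod n) (k : ℤ) (hk : k < 0) (x : List (Vec n)) : tauF n r k x = 0 := by
  simp [tauF, not_le.2 hk]

lemma tauF_nil (n : ℕ) (r : ZMod n) (k : ℤ) : tauF n r k [] = if k = 0 then 1 else 0 := by
  rcases lt_or_ge k 0 with h | h
  · simp [tauF_neg n r k h, h.ne]
  · simp only [tauF, if_pos h, List.length_nil]
    rcases eq_or_ne k 0 with rfl | hk
    · simp
    · rw [if_neg hk]
      have : ¬ ((0:ℤ).toNat = k.toNat) := by omega
      have he : ((Fintype.piFinset fun _ : Fin 0 => Finset.range n).filter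
          (fun c => ∑ i, c i = k.toNat)) = ∅ := by
        apply Finset.filter_eq_empty_iff.2
        intro c _
        simp only [Fintype.sum_empty]
        omega
      rw [he, Finset.sum_empty]

-- helper: filtered sum over piFinset range n = sum over functions to Fin n
lemma piFinset_to_fin {m n : ℕ} (hn : 0 < n) (f : (Fin m → ℕ) → ℝ) :
    ∑ c ∈ Fintype.piFinset fun _ : Fin m => Finset.range n, f c
      = ∑ g : Fin m → Fin n, f (fun i => (g i : ℕ)) := by
  have key : ∀ c ∈ Fintype.piFinset fun _ : Fin m => Finset.range n,
      (fun i => (((⟨c i % n, Nat.mod_lt _ hn⟩ : Fin n)) : ℕ)) = c := by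
    intro c hc
    funext i
    simp only
    exact Nat.mod_eq_of_lt (by simpa using Fintype.mem_piFinset.1 hc i)
  apply Finset.sum_nbij' (i := fun c => fun i => (⟨c i % n, Nat.mod_lt _ hn⟩ : Fin n))
    (j := fun g => fun i => (g i : ℕ))
  · intro c hc; exact Finset.mem_univ _
  · intro g hg; simp [Fintype.mem_piFinset]
  · intro c hc; exact key c hc
  · intro g hg
    funext i
    simp [Nat.mod_eq_of_lt (g i).isLt]
  · intro c hc
    rw [key c hc]

lemma filter_lt_succ_sum {m : ℕ} (t : ℕ) (c' : Fin m → ℕ) (i : Fin m) :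
    ∑ i' ∈ Finset.univ.filter (fun i' => i' < Fin.succ i), Fin.cons t c' i'
      = t + ∑ i' ∈ Finset.univ.filter (fun i' => i' < i), c' i' := by
  have hset : Finset.univ.filter (fun i' : Fin (m+1) => i' < Fin.succ i)
      = insert 0 ((Finset.univ.filter (fun i' : Fin m => i' < i)).image Fin.succ) := by
    ext i'
    simp only [Finset.mem_filter, Finset.mem_univ, true_and, Finset.mem_insert,
      Finset.mem_image]
    constructor
    · intro h
      rcases Fin.eq_zero_or_eq_succ i' with rfl | ⟨j, rfl⟩
      · exact Or.inl rfl
      · exact Or.inr ⟨j, by simpa [Fin.succ_lt_succ_iff] using h, rfl⟩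
    · rintro (rfl | ⟨j, hj, rfl⟩)
      · exact Fin.succ_pos i
      · exact Fin.succ_lt_succ_iff.2 hj
  rw [hset, Finset.sum_insert, Finset.sum_image (fun a _ b _ h => Fin.succ_injective _ h)]
  · simp [Fin.cons_zero, Fin.cons_succ]
  · simp only [Finset.mem_image, Finset.mem_filter, Finset.mem_univ, true_and, not_exists,
      not_and]
    intro j _ h
    exact Fin.succ_ne_zero j h

lemma tauF_cons (n : ℕ) (hn : 0 < n) (r : ZMod n) (k : ℤ) (y : Vec n) (L : List (Vec n)) :
    tauF n r k (y :: L) = ∑ t ∈ Finset.range n,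
      (∏ β ∈ Finset.range t, y (r - (β : ℕ))) * tauF n (r - (t : ℕ)) (k - (t : ℤ)) L := by
  rcases lt_or_ge k 0 with hk | hk
  · rw [tauF_neg _ _ _ hk]
    symm
    apply Finset.sum_eq_zero
    intro t _
    rw [tauF_neg _ _ _ (by omega), mul_zero]
  · rw [tauF, if_pos hk]
    simp only [List.length_cons, List.get_eq_getElem]
    rw [Finset.sum_filter, piFinset_to_fin hn,
      ← Equiv.sum_comp (Fin.consEquiv fun _ : Fin (L.length + 1) => Fin n),
      Fintype.sum_prod_type, Finset.sum_range]
    apply Finset.sum_congr rfl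
    intro t _
    have hc : ∀ g' : Fin L.length → Fin n,
        (fun i => (((Fin.consEquiv fun _ : Fin (L.length+1) => Fin n) (t, g')) i : ℕ))
          = (Fin.cons (t : ℕ) (fun i => (g' i : ℕ)) : Fin (L.length+1) → ℕ) := by
      intro g'
      funext i
      induction i using Fin.cases with
      | zero => simp [Fin.consEquiv]
      | succ i => simp [Fin.consEquiv]
    simp only [hc]
    have step1 : ∀ g' : Fin L.length → Fin n,
        (if ∑ i, (Fin.cons (t : ℕ) (fun i => (g' i : ℕ)) : Fin (L.length+1) → ℕ) i = k.toNat then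
          ∏ x : Fin (L.length + 1), ∏ β ∈ Finset.range ((Fin.cons (t : ℕ) (fun i => (g' i : ℕ)) : Fin (L.length+1) → ℕ) x),
            (y :: L)[(x : ℕ)]
              (r - (∑ i' ∈ Finset.filter (fun i' => i' < x) Finset.univ,
                  (Fin.cons (t : ℕ) (fun i => (g' i : ℕ)) : Fin (L.length+1) → ℕ) i' : ℕ) - (β : ℕ))
          else 0)
        = (∏ β ∈ Finset.range (t : ℕ), y (r - (β : ℕ))) *
          (if (t : ℕ) + ∑ i, (g' i : ℕ) = k.toNat then
            ∏ i : Fin L.length, ∏ β ∈ Finset.range ((g' i : ℕ)),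
              L[(i : ℕ)]
                (r - ((t : ℕ) + ∑ i' ∈ Finset.filter (fun i' => i' < i) Finset.univ,
                    (g' i' : ℕ) : ℕ) - (β : ℕ))
            else 0) := by
      intro g'
      rw [mul_ite, mul_zero, Fin.sum_cons]
      apply if_congr Iff.rfl _ rfl
      rw [Fin.prod_univ_succ]
      congr 1
      · simp [Fin.cons_zero]; rfl
      · apply Finset.prod_congr rfl
        intro i _
        rw [Fin.cons_succ]
        apply Finset.prod_congr rfl
        intro β _
        rw [filter_lt_succ_sum]
        simp [Fin.cons_succ]
    have hc' : ∀ (g' : Fin L.length → Fin n) (i : Fin (L.length+1)),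
        (((Fin.consEquiv fun _ : Fin (L.length+1) => Fin n) (t, g')) i : ℕ)
          = (Fin.cons (t : ℕ) (fun i => (g' i : ℕ)) : Fin (L.length+1) → ℕ) i :=
      fun g' i => congrFun (hc g') i
    simp only [hc']
    refine Eq.trans (Finset.sum_congr rfl fun g' _ => step1 g') ?_
    rw [← Finset.mul_sum]
    congr 1
    rcases le_or_gt (((t : ℕ) : ℤ)) k with htk | htk
    · rw [tauF, if_pos (by omega)]
      simp only [List.get_eq_getElem]
      rw [Finset.sum_filter, piFinset_to_fin hn]
      apply Finset.sum_congr rfl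
      intro g' _
      have hiff : ((t : ℕ) + ∑ i, (g' i : ℕ) = k.toNat)
          ↔ (∑ i, (g' i : ℕ) = (k - ((t : ℕ) : ℤ)).toNat) := by omega
      apply if_congr hiff _ rfl
      apply Finset.prod_congr rfl
      intro i _
      apply Finset.prod_congr rfl
      intro β _
      push_cast
      ring
    · rw [tauF_neg _ _ _ (by omega)]
      apply Finset.sum_eq_zero
      intro g' _
      rw [if_neg (by omega)]

lemma tauF_snoc (n : ℕ) (hn : 0 < n) (r : ZMod n) (k : ℤ) (L : List (Vec n)) (v : Vec n) :
    tauF n r k (L ++ [v]) = ∑ d ∈ Finset.range n,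
      tauF n r (k - (d : ℤ)) L *
        ∏ β ∈ Finset.range d, v (r - (k : ZMod n) + (d : ℕ) - (β : ℕ)) := by
  induction L generalizing r k with
  | nil =>
    simp only [List.nil_append]
    rw [tauF_cons n hn]
    apply Finset.sum_congr rfl
    intro d hd
    rw [tauF_nil, tauF_nil]
    rcases eq_or_ne (k - (d : ℤ)) 0 with h | h
    · rw [if_pos h, mul_one, one_mul]
      have hkd : (k : ZMod n) = ((d : ℕ) : ZMod n) := by
        have : k = ((d : ℕ) : ℤ) := by omega
        rw [this]
        push_cast
        ring
      apply Finset.prod_congr rfl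
      intro β _
      congr 1
      rw [hkd]
      ring
    · rw [if_neg h, mul_zero, zero_mul]
  | cons y L ih =>
    rw [List.cons_append, tauF_cons n hn]
    calc ∑ t ∈ Finset.range n,
          (∏ β ∈ Finset.range t, y (r - (β : ℕ))) *
            tauF n (r - (t : ℕ)) (k - (t : ℤ)) (L ++ [v])
        = ∑ t ∈ Finset.range n, ∑ d ∈ Finset.range n,
            (∏ β ∈ Finset.range t, y (r - (β : ℕ))) *
              (tauF n (r - (t : ℕ)) ((k - (t : ℤ)) - (d : ℤ)) L *
                ∏ β ∈ Finset.range d, v (r - (k : ZMod n) + (d : ℕ) - (β : ℕ))) := by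
          apply Finset.sum_congr rfl
          intro t _
          rw [ih (r - (t : ℕ)) (k - (t : ℤ)), Finset.mul_sum]
          apply Finset.sum_congr rfl
          intro d _
          congr 1
          congr 1
          apply Finset.prod_congr rfl
          intro β _
          congr 1
          push_cast
          ring
      _ = ∑ d ∈ Finset.range n,
            (∑ t ∈ Finset.range n,
              (∏ β ∈ Finset.range t, y (r - (β : ℕ))) *
                tauF n (r - (t : ℕ)) ((k - (d : ℤ)) - (t : ℤ)) L) *
              ∏ β ∈ Finset.range d, v (r - (k : ZMod n) + (d : ℕ) - (β : ℕ)) := by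
          rw [Finset.sum_comm]
          apply Finset.sum_congr rfl
          intro d _
          rw [Finset.sum_mul]
          apply Finset.sum_congr rfl
          intro t _
          rw [show (k - (t : ℤ)) - (d : ℤ) = (k - (d : ℤ)) - (t : ℤ) by ring]
          ring
      _ = _ := by
          apply Finset.sum_congr rfl
          intro d _
          rw [← tauF_cons n hn]

lemma tauF_gt (n : ℕ) (r : ZMod n) (k : ℤ) (L : List (Vec n))
    (h : (((n - 1) * L.length : ℕ) : ℤ) < k) : tauF n r k L = 0 := by
  have hk : 0 ≤ k := le_trans (by positivity) (le_of_lt h)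
  rw [tauF, if_pos hk]
  have he : ((Fintype.piFinset fun _ : Fin L.length => Finset.range n).filter
      (fun c => ∑ i, c i = k.toNat)) = ∅ := by
    apply Finset.filter_eq_empty_iff.2
    intro c hc
    have hb : ∀ i, c i ≤ n - 1 := by
      intro i
      have := Fintype.mem_piFinset.1 hc i
      simp only [Finset.mem_range] at this
      omega
    have hs : ∑ i, c i ≤ (n - 1) * L.length := by
      calc ∑ i, c i ≤ ∑ _i : Fin L.length, (n - 1) := Finset.sum_le_sum fun i _ => hb i
        _ = (n - 1) * L.length := by
          rw [Finset.sum_const, Finset.card_univ, Fintype.card_fin, smul_eq_mul, mul_comm]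
    omega
  rw [he, Finset.sum_empty]

lemma seg_cons {n : ℕ} (x : ℕ → Vec n) (i j : ℕ) (h : i ≤ j) :
    seg x i j = x i :: seg x (i + 1) j := by
  unfold seg
  rw [show j + 1 - i = (j - i) + 1 by omega, List.range_succ_eq_map]
  rw [show j + 1 - (i + 1) = j - i by omega]
  simp only [List.map_cons, List.map_map, add_zero]
  congr 1
  apply List.map_congr_left
  intro t _
  simp only [Function.comp_apply]
  have : i + t.succ = i + 1 + t := by omega
  rw [this]

lemma seg_snoc {n : ℕ} (x : ℕ → Vec n) (i j : ℕ) (h : i ≤ j + 1) :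
    seg x i (j + 1) = seg x i j ++ [x (j + 1)] := by
  unfold seg
  rw [show j + 1 + 1 - i = (j + 1 - i) + 1 by omega, List.range_succ]
  rw [List.map_append]
  congr 1
  simp only [List.map_cons, List.map_nil]
  have : i + (j + 1 - i) = j + 1 := by omega
  rw [this]

lemma seg_length {n : ℕ} (x : ℕ → Vec n) (i j : ℕ) :
    (seg x i j).length = j + 1 - i := by
  simp [seg]

end BirationalR

/-- branching identity for `σ`. -/
theorem sigma_branching (n : ℕ) (hn : 2 ≤ n) (x : ℕ → Vec n)
    (hx : ∀ p r, 0 < x p r) (i j : ℕ) (hij : i < j) (r : ZMod n) :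
    sigmaF n r ((n - 1) * (j - i)) (seg x i j) =
      ∑ k ∈ Finset.range n,
        (∏ t ∈ Finset.range k, x i (r - (t : ℕ))) *
          sigmaF n (r - (k : ℕ)) ((n - 1) * (j - i - 1)) (seg x i (j - 1)) *
          ∏ s ∈ Finset.range (n - k - 1),
            x j (r - (k : ℕ) + (j : ℕ) - (i : ℕ) - 1 - (s : ℕ)) := by
  have hn0 : 0 < n := by omega
  set K := (n - 1) * (j - i) with hK
  set K' := (n - 1) * (j - i - 1) with hK'
  have hKK' : K = K' + (n - 1) := by
    obtain ⟨m, hm⟩ : ∃ m, j - i = m + 1 := ⟨j - i - 1, by omega⟩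
    have hm' : j - i - 1 = m := by omega
    rw [hK, hK', hm', hm]
    ring
  have hseg1 : seg x i j = x i :: seg x (i + 1) j := seg_cons x i j (le_of_lt hij)
  have hseg2 : seg x (i + 1) j = seg x (i + 1) (j - 1) ++ [x j] := by
    calc seg x (i+1) j = seg x (i+1) ((j-1)+1) := by rw [show (j-1)+1 = j by omega]
      _ = seg x (i+1) (j-1) ++ [x ((j-1)+1)] := seg_snoc x (i+1) (j-1) (by omega)
      _ = seg x (i+1) (j-1) ++ [x j] := by rw [show (j-1)+1 = j by omega]
  have hseg3 : seg x i (j - 1) = x i :: seg x (i + 1) (j - 1) := seg_cons x i (j-1) (by omega)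
  have hmidlen : (seg x (i+1) (j-1)).length = j - i - 1 := by rw [seg_length]; omega
  have hcastK : ((K : ℕ) : ZMod n) = (i : ZMod n) - (j : ZMod n) := by
    rw [hK, Nat.cast_mul, Nat.cast_sub (le_of_lt hij), Nat.cast_sub (by omega : 1 ≤ n),
      Nat.cast_one, ZMod.natCast_self]
    ring
  set mid := seg x (i+1) (j-1) with hmid
  set P : ℕ → ℝ := fun t => ∏ β ∈ Finset.range t, x i (r - (β : ℕ)) with hPdef
  set V : ℕ → ℝ := fun d =>
    ∏ β ∈ Finset.range d, x j (r - ((K : ℕ) : ZMod n) + (d : ℕ) - (β : ℕ)) with hVdef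
  have step1 : sigmaF n r K (seg x i j)
      = ∑ t ∈ Finset.range (K + 1), ∑ d ∈ Finset.range n,
          P t * (tauF n (r - (t : ℕ)) ((K : ℤ) - (t : ℤ) - (d : ℤ)) mid * V d) := by
    rw [hseg1]
    show (∑ t ∈ Finset.range (K + 1),
        (∏ β ∈ Finset.range t, x i (r - (β : ℕ))) *
          tauF n (r - (t : ℕ)) ((K : ℤ) - (t : ℤ)) (seg x (i+1) j)) = _
    rw [hseg2]
    apply Finset.sum_congr rfl
    intro t _
    rw [tauF_snoc n hn0, Finset.mul_sum]
    apply Finset.sum_congr rfl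
    intro d _
    congr 1
    congr 1
    apply Finset.prod_congr rfl
    intro β _
    congr 1
    push_cast
    ring
  rw [step1, Finset.sum_comm]
  conv_rhs => rw [← Finset.sum_range_reflect]
  apply Finset.sum_congr rfl
  intro d hd
  have hdn : d < n := Finset.mem_range.1 hd
  set k := n - 1 - d with hkdef
  have hkd : k + d = n - 1 := by omega
  clear_value k
  have hcastd : ((d : ℕ) : ZMod n) = -1 - ((k : ℕ) : ZMod n) := by
    have h0 : ((d + k + 1 : ℕ) : ZMod n) = 0 := by
      rw [show d + k + 1 = n by omega]
      exact ZMod.natCast_self n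
    push_cast at h0
    linear_combination h0
  have hVQ : V d = ∏ s ∈ Finset.range (n - k - 1),
      x j (r - (k : ℕ) + (j : ℕ) - (i : ℕ) - 1 - (s : ℕ)) := by
    rw [show n - k - 1 = d by omega]
    apply Finset.prod_congr rfl
    intro β _
    congr 1
    rw [hcastK, hcastd]
    ring
  have hsum : ∑ t ∈ Finset.range (K + 1),
        P t * (tauF n (r - (t : ℕ)) ((K : ℤ) - (t : ℤ) - (d : ℤ)) mid * V d)
      = (∑ t' ∈ Finset.range (K' + 1),
          P (k + t') * tauF n (r - ((k + t' : ℕ) : ZMod n))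
            ((K : ℤ) - ((k + t' : ℕ) : ℤ) - (d : ℤ)) mid) * V d := by
    rw [Finset.sum_mul]
    have htrunc : ∑ t ∈ Finset.range (K + 1),
          P t * (tauF n (r - (t : ℕ)) ((K : ℤ) - (t : ℤ) - (d : ℤ)) mid * V d)
        = ∑ t ∈ Finset.range (k + (K' + 1)),
          P t * (tauF n (r - (t : ℕ)) ((K : ℤ) - (t : ℤ) - (d : ℤ)) mid * V d) := by
      symm
      apply Finset.sum_subset
      · apply Finset.range_subset_range.2
        omega
      · intro t _ ht
        have htk : k + K' + 1 ≤ t := by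
          simp only [Finset.mem_range] at ht
          omega
        rw [tauF_neg n _ _ (by omega), zero_mul, mul_zero]
    rw [htrunc, Finset.sum_range_add]
    have hz : ∑ t ∈ Finset.range k,
        P t * (tauF n (r - (t : ℕ)) ((K : ℤ) - (t : ℤ) - (d : ℤ)) mid * V d) = 0 := by
      apply Finset.sum_eq_zero
      intro t ht
      have htk : t < k := Finset.mem_range.1 ht
      rw [tauF_gt n _ _ _ (by rw [hmidlen, ← hK']; omega), zero_mul, mul_zero]
    rw [hz, zero_add]
    apply Finset.sum_congr rfl
    intro t' _
    ring
  rw [hsum, hVQ]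
  congr 1
  rw [hseg3]
  show _ = P k * ∑ t' ∈ Finset.range (K' + 1),
      (∏ β ∈ Finset.range t', x i (r - (k : ℕ) - (β : ℕ))) *
        tauF n (r - (k : ℕ) - (t' : ℕ)) ((K' : ℤ) - (t' : ℤ)) mid
  rw [Finset.mul_sum]
  apply Finset.sum_congr rfl
  intro t' _
  have hPsplit : P (k + t') = P k * ∏ β ∈ Finset.range t', x i (r - (k : ℕ) - (β : ℕ)) := by
    rw [hPdef]
    simp only
    rw [Finset.prod_range_add]
    congr 1
    apply Finset.prod_congr rfl
    intro β _
    congr 1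
    push_cast
    ring
  rw [hPsplit]
  have harg1 : r - ((k + t' : ℕ) : ZMod n) = r - (k : ℕ) - (t' : ℕ) := by
    push_cast
    ring
  have harg2 : (K : ℤ) - ((k + t' : ℕ) : ℤ) - (d : ℤ) = (K' : ℤ) - (t' : ℤ) := by
    push_cast
    omega
  rw [harg1, harg2]
  ring
end
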